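/- For every integer m ≥ 1 and every t ∈ ℝ, let F_m(t) be the m×m real matrix with entries F_{ij}(t) = (t−1)^{j−i+1} e^{−(j−i+2)t} when j ≥ i, F_{ij}(t) = e^{−t} − 1 when j = i − 1, and F_{ij}(t) = 0 when j < i − 1. Then det F_m(t) = (t−1)^m e^{−(m+1)t}. -/

import Mathlib

open Matrix

noncomputable section

/-- the upper Hessenberg matrix `F_m(t)` with entries
`(t-1)^{j-i+1} e^{-(j-i+2)t}` for `j ≥ i`, `e^{-t} - 1` on the subdiagonal,
and `0` below the subdiagonal. -/
def Fmat (m : ℕ) (t : ℝ) : Matrix (Fin m) (Fin m) ℝ := Matrix.of fun i j =>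
  if i.val ≤ j.val then
    (t - 1) ^ (j.val - i.val + 1) * Real.exp (-((j.val - i.val + 2 : ℕ) : ℝ) * t)
  else if j.val + 1 = i.val then Real.exp (-t) - 1
  else 0

/-- `det F_m(t) = (t-1)^m e^{-(m+1)t}` for every `m ≥ 1` and `t ∈ ℝ`. -/
theorem det_Fmat (m : ℕ) (hm : 1 ≤ m) (t : ℝ) :
    (Fmat m t).det = (t - 1) ^ m * Real.exp (-((m + 1 : ℕ) : ℝ) * t) := by
  induction m, hm using Nat.le_induction with
  | base =>
      simp [Fmat, Matrix.det_fin_one]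
  | succ m hm ih =>
      set b := (t - 1) * Real.exp (-t) with hb
      have h1v : ((1 : Fin (m + 1)) : ℕ) = 1 := by
        simp [Fin.val_one', Nat.mod_eq_of_lt (by omega : 1 < m + 1)]
      have h01 : (0 : Fin (m + 1)) ≠ 1 := by
        intro h
        have := congrArg Fin.val h
        simp [h1v] at this
        omega
      have hupd := Matrix.det_updateRow_add_smul_self (Fmat (m+1) t) h01 (-b)
      set M := (Fmat (m+1) t).updateRow 0
        (Fmat (m+1) t 0 + (-b) • Fmat (m+1) t 1) with hM
      have hexp2 : Real.exp (-((2:ℝ) * t)) = Real.exp (-t) * Real.exp (-t) := by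
        rw [← Real.exp_add]; ring_nf
      have hM0 : ∀ j : Fin (m+1), M 0 j = if j = 0 then b else 0 := by
        intro j
        rw [hM, Matrix.updateRow_self]
        by_cases hj : j = 0
        · subst hj
          simp only [Fmat, Matrix.of_apply, Fin.val_zero, h1v, Pi.add_apply,
            Pi.smul_apply, smul_eq_mul, if_pos (le_refl 0)]
          norm_num
          rw [hexp2, hb]
          ring
        · have hj1 : 1 ≤ j.val := by
            rcases Nat.eq_zero_or_pos j.val with h | h
            · exact absurd (Fin.ext h) hj
            · exact h
          rw [if_neg hj]
          simp only [Fmat, Matrix.of_apply, Fin.val_zero, h1v, Pi.add_apply,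
            Pi.smul_apply, smul_eq_mul, if_pos (Nat.zero_le _), if_pos hj1,
            Nat.zero_le, if_true]
          have h1 : j.val - 0 = j.val := by omega
          have h2 : j.val - 1 + 1 = j.val := by omega
          have h4 : j.val - 1 + 2 = j.val + 1 := by omega
          rw [h1, h2, h4]
          push_cast
          rw [show -((j.val:ℝ) + 2) * t = -t + -((j.val:ℝ) + 1) * t by ring,
            Real.exp_add, pow_succ, hb]
          ring
      have hsub : M.submatrix Fin.succ (Fin.succAbove 0) = Fmat m t := by
        ext i j
        rw [Matrix.submatrix_apply, Fin.zero_succAbove, hM,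
          Matrix.updateRow_ne (Fin.succ_ne_zero i)]
        simp only [Fmat, Matrix.of_apply, Fin.val_succ]
        have e1 : i.val + 1 ≤ j.val + 1 ↔ i.val ≤ j.val := by omega
        have e2 : j.val + 1 - (i.val + 1) = j.val - i.val := by omega
        have e3 : j.val + 1 + 1 = i.val + 1 ↔ j.val + 1 = i.val := by omega
        rw [e2]
        by_cases h : i.val ≤ j.val
        · rw [if_pos (e1.mpr h), if_pos h]
        · rw [if_neg (fun hc => h (e1.mp hc)), if_neg h]
          by_cases h' : j.val + 1 = i.val
          · rw [if_pos (e3.mpr h'), if_pos h']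
          · rw [if_neg (fun hc => h' (e3.mp hc)), if_neg h']
      have hdet : M.det = b * (Fmat m t).det := by
        rw [Matrix.det_succ_row_zero, Fin.sum_univ_succ]
        have hz : ∀ j : Fin m,
            (-1 : ℝ) ^ ((j.succ : Fin (m+1)) : ℕ) * M 0 j.succ *
              (M.submatrix Fin.succ (Fin.succAbove j.succ)).det = 0 := by
          intro j
          rw [hM0, if_neg (Fin.succ_ne_zero j)]
          ring
        rw [Finset.sum_congr rfl (fun j _ => hz j), Finset.sum_const, smul_zero,
          add_zero, hM0, if_pos rfl, hsub]
        simp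
      rw [← hupd, hdet, ih, hb]
      have hexp : Real.exp (-t) * Real.exp (-((m + 1 : ℕ) : ℝ) * t)
          = Real.exp (-((m + 1 + 1 : ℕ) : ℝ) * t) := by
        rw [← Real.exp_add]; push_cast; ring_nf
      rw [pow_succ, ← hexp]
      ring
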